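/- Let k ≥ 2 and let t₁, …, t_k be positive integers. Then there exists a family (u_S) of positive integers, indexed by the nonempty subsets S of {1, …, k}, such that (a) for every nonempty S ⊆ {1, …, k}, gcd{t_i : i ∈ S} = ∏_{T ⊇ S, T nonempty} u_T, and (b) lcm(t₁, …, t_k) = ∏_{S nonempty} u_S. -/

import Mathlib

open Finset

private lemma prod_pow_fac {n : ℕ} (hn : n ≠ 0) {F : Finset ℕ}
    (hF : n.primeFactors ⊆ F) :
    ∏ p ∈ F, p ^ n.factorization p = n := by
  conv_rhs => rw [← Nat.factorization_prod_pow_eq_self hn]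
  rw [Finsupp.prod, Nat.support_factorization]
  refine (Finset.prod_subset hF ?_).symm
  intro p _ hp
  have h0 : n.factorization p = 0 := by
    rw [← Nat.support_factorization] at hp
    exact Finsupp.notMem_support_iff.mp hp
  simp [h0]

private lemma fac_gcd {k : ℕ} (t : Fin k → ℕ) (ht : ∀ i, 0 < t i) (p : ℕ)
    {S : Finset (Fin k)} (hS : S.Nonempty) :
    (S.gcd t).factorization p = S.inf' hS (fun i => (t i).factorization p) := by
  induction hS using Finset.Nonempty.cons_induction with
  | singleton i => simp
  | cons i s hi hs ih =>
      have hgcd0 : s.gcd t ≠ 0 := by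
        rw [Ne, Finset.gcd_eq_zero_iff]
        obtain ⟨j, hj⟩ := hs
        exact fun h => (ht j).ne' (h j hj)
      rw [show (Finset.cons i s hi).gcd t = gcd (t i) (s.gcd t) by
        rw [Finset.cons_eq_insert, Finset.gcd_insert], Finset.inf'_cons hs]
      rw [show gcd (t i) (s.gcd t) = Nat.gcd (t i) (s.gcd t) from rfl]
      rw [Nat.factorization_gcd (ht i).ne' hgcd0, Finsupp.inf_apply, ih]

private lemma fac_lcm {k : ℕ} (t : Fin k → ℕ) (ht : ∀ i, 0 < t i) (p : ℕ)
    (s : Finset (Fin k)) :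
    (s.lcm t).factorization p = s.sup (fun i => (t i).factorization p) := by
  induction s using Finset.induction with
  | empty => simp
  | @insert i s hi ih =>
      have hlcm0 : s.lcm t ≠ 0 := by
        rw [Ne, Finset.lcm_eq_zero_iff]
        rintro ⟨j, hj, h⟩
        exact (ht j).ne' h
      rw [Finset.lcm_insert, Finset.sup_insert]
      rw [show lcm (t i) (s.lcm t) = Nat.lcm (t i) (s.lcm t) from rfl]
      rw [Nat.factorization_lcm (ht i).ne' hlcm0, Finsupp.sup_apply, ih]

theorem lcm_gcd_factorization (k : ℕ) (hk : 2 ≤ k) (t : Fin k → ℕ)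
    (ht : ∀ i, 0 < t i) :
    ∃ u : Finset (Fin k) → ℕ,
      (∀ S : Finset (Fin k), S.Nonempty → 0 < u S) ∧
      (∀ S : Finset (Fin k), S.Nonempty →
        S.gcd t = ∏ T ∈ Finset.univ.filter
          (fun T : Finset (Fin k) => S ⊆ T ∧ T.Nonempty), u T) ∧
      Finset.univ.lcm t = ∏ S ∈ Finset.univ.filter
          (fun S : Finset (Fin k) => S.Nonempty), u S := by
  classical
  set L := Finset.univ.lcm t with hLdef
  have hL : L ≠ 0 := by
    rw [hLdef, Ne, Finset.lcm_eq_zero_iff]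
    rintro ⟨j, _, h⟩
    exact (ht j).ne' h
  set e : ℕ → Fin k → ℕ := fun p i => (t i).factorization p with he
  set ftype : ℕ → ℕ → Finset (Fin k) :=
    fun p x => Finset.univ.filter (fun i => x < e p i) with hftype
  set g : ℕ → Finset (Fin k) → ℕ :=
    fun p S => ((Finset.range (L.factorization p)).filter
      (fun x => ftype p x = S)).card with hg
  refine ⟨fun S => ∏ p ∈ L.primeFactors, p ^ g p S, ?_, ?_, ?_⟩
  · intro S _
    exact Finset.prod_pos (fun p hp => pow_pos (Nat.prime_of_mem_primeFactors hp).pos _)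
  · -- gcd identity
    intro S hS
    have hgcd0 : S.gcd t ≠ 0 := by
      rw [Ne, Finset.gcd_eq_zero_iff]
      obtain ⟨j, hj⟩ := hS
      exact fun h => (ht j).ne' (h j hj)
    have hdvd : S.gcd t ∣ L := by
      obtain ⟨j, hj⟩ := hS
      exact (Finset.gcd_dvd hj).trans (Finset.dvd_lcm (Finset.mem_univ j))
    have hkey : ∀ p : ℕ, (S.gcd t).factorization p =
        ∑ T ∈ Finset.univ.filter (fun T : Finset (Fin k) => S ⊆ T ∧ T.Nonempty), g p T := by
      intro p
      have hmin : (S.gcd t).factorization p = S.inf' hS (e p) := fac_gcd t ht p hS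
      have hle : (S.gcd t).factorization p ≤ L.factorization p := by
        have h2 := (Nat.factorization_le_iff_dvd hgcd0 hL).mpr hdvd
        exact h2 p
      have h1 : (S.gcd t).factorization p =
          ∑ T ∈ Finset.univ.filter (fun T : Finset (Fin k) => S ⊆ T ∧ T.Nonempty),
            ((Finset.range ((S.gcd t).factorization p)).filter (fun x => ftype p x = T)).card := by
        conv_lhs => rw [← Finset.card_range ((S.gcd t).factorization p)]
        apply Finset.card_eq_sum_card_fiberwise
        intro x hx
        rw [Finset.mem_coe, Finset.mem_range, hmin, Finset.lt_inf'_iff] at hx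
        simp only [Finset.mem_coe, Finset.mem_filter, Finset.mem_univ, true_and]
        refine ⟨fun i hi => ?_, ?_⟩
        · simp only [hftype, Finset.mem_filter, Finset.mem_univ, true_and]
          exact hx i hi
        · obtain ⟨j, hj⟩ := hS
          refine ⟨j, ?_⟩
          simp only [hftype, Finset.mem_filter, Finset.mem_univ, true_and]
          exact hx j hj
      rw [h1]
      apply Finset.sum_congr rfl
      intro T hT
      rw [Finset.mem_filter] at hT
      obtain ⟨-, hST, hTne⟩ := hT
      simp only [hg]
      congr 1
      ext x
      simp only [Finset.mem_filter, Finset.mem_range]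
      constructor
      · rintro ⟨hx, hfx⟩
        exact ⟨lt_of_lt_of_le hx hle, hfx⟩
      · rintro ⟨hx, hfx⟩
        refine ⟨?_, hfx⟩
        rw [hmin, Finset.lt_inf'_iff]
        intro i hi
        have hmem : i ∈ ftype p x := hfx ▸ hST hi
        simpa only [hftype, Finset.mem_filter, Finset.mem_univ, true_and] using hmem
    refine Eq.symm ?_
    calc ∏ T ∈ Finset.univ.filter (fun T : Finset (Fin k) => S ⊆ T ∧ T.Nonempty),
            ∏ p ∈ L.primeFactors, p ^ g p T
        = ∏ p ∈ L.primeFactors,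
            ∏ T ∈ Finset.univ.filter (fun T : Finset (Fin k) => S ⊆ T ∧ T.Nonempty),
              p ^ g p T := Finset.prod_comm
      _ = ∏ p ∈ L.primeFactors, p ^ (S.gcd t).factorization p := by
          refine Finset.prod_congr rfl (fun p _ => ?_)
          rw [Finset.prod_pow_eq_pow_sum, ← hkey p]
      _ = S.gcd t := prod_pow_fac hgcd0 (Nat.primeFactors_mono hdvd hL)
  · -- lcm identity
    have hkey : ∀ p : ℕ, L.factorization p =
        ∑ S ∈ Finset.univ.filter (fun S : Finset (Fin k) => S.Nonempty), g p S := by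
      intro p
      have hsup : L.factorization p = Finset.univ.sup (e p) := fac_lcm t ht p _
      simp only [hg]
      conv_lhs => rw [← Finset.card_range (L.factorization p)]
      apply Finset.card_eq_sum_card_fiberwise
      intro x hx
      rw [Finset.mem_coe, Finset.mem_range, hsup, Finset.lt_sup_iff] at hx
      obtain ⟨i, _, hi⟩ := hx
      simp only [Finset.mem_coe, Finset.mem_filter, Finset.mem_univ, true_and]
      refine ⟨i, ?_⟩
      simp only [hftype, Finset.mem_filter, Finset.mem_univ, true_and]
      exact hi
    refine Eq.symm ?_
    calc ∏ S ∈ Finset.univ.filter (fun S : Finset (Fin k) => S.Nonempty),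
            ∏ p ∈ L.primeFactors, p ^ g p S
        = ∏ p ∈ L.primeFactors,
            ∏ S ∈ Finset.univ.filter (fun S : Finset (Fin k) => S.Nonempty),
              p ^ g p S := Finset.prod_comm
      _ = ∏ p ∈ L.primeFactors, p ^ L.factorization p := by
          refine Finset.prod_congr rfl (fun p _ => ?_)
          rw [Finset.prod_pow_eq_pow_sum, ← hkey p]
      _ = L := prod_pow_fac hL (le_refl _)
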